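/- For λ > 0, λ·∫₀^∞ ∫_{π/3}^{2π/3} e^{-(λ/√3)·r²·sin²φ} · r³ · cos²φ dφ dr = √3/(9λ), and λ·∫₀^∞ ∫_{π/3}^{2π/3} e^{-(λ/√3)·r²·sin²φ} · r³ · sin²φ dφ dr = √3/λ. -/

import Mathlib

open Real MeasureTheory

lemma sin_lb {φ : ℝ} (h1 : π/3 ≤ φ) (h2 : φ ≤ 2*π/3) : Real.sqrt 3 / 2 ≤ Real.sin φ := by
  have : Real.sin φ = Real.cos (|φ - π/2|) := by
    rw [Real.cos_abs, Real.cos_sub, Real.cos_pi_div_two, Real.sin_pi_div_two]; ring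
  rw [this, ← Real.cos_pi_div_six]
  apply Real.cos_le_cos_of_nonneg_of_le_pi (abs_nonneg _)
  · linarith [Real.pi_pos]
  · rw [abs_le]; constructor <;> linarith

lemma gauss_cubed {c : ℝ} (hc : 0 < c) :
    ∫ r in Set.Ioi (0:ℝ), Real.exp (-c * r^2) * r^3 = 1/(2*c^2) := by
  have h1 : ∫ r in Set.Ioi (0:ℝ), Real.exp (-c * r^2) * r^3
      = ∫ r in Set.Ioi (0:ℝ), r ^ (3:ℝ) * Real.exp (-c * r ^ (2:ℝ)) := by
    refine setIntegral_congr_fun measurableSet_Ioi (fun x hx => ?_)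
    rw [show (3:ℝ) = ((3:ℕ):ℝ) by norm_num, show (2:ℝ) = ((2:ℕ):ℝ) by norm_num,
      Real.rpow_natCast, Real.rpow_natCast]
    ring
  rw [h1, integral_rpow_mul_exp_neg_mul_rpow two_pos (by norm_num) hc]
  norm_num

lemma swapped {a : ℝ} (ha : 0 < a) (w : ℝ → ℝ) (hw : Continuous w) (hb : ∀ φ, |w φ| ≤ 1) :
    (∫ r in Set.Ioi (0:ℝ), ∫ φ in (π/3)..(2*π/3),
        Real.exp (-a * r^2 * Real.sin φ^2) * r^3 * w φ)
    = ∫ φ in (π/3)..(2*π/3), w φ / (2 * (a * Real.sin φ^2)^2) := by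
  have hpi := Real.pi_pos
  have hle : π/3 ≤ 2*π/3 := by linarith
  simp_rw [intervalIntegral.integral_of_le hle]
  have hint : Integrable (Function.uncurry fun r φ =>
      Real.exp (-a * r^2 * Real.sin φ^2) * r^3 * w φ)
      ((volume.restrict (Set.Ioi (0:ℝ))).prod (volume.restrict (Set.Ioc (π/3) (2*π/3)))) := by
    have hg : Integrable (fun p : ℝ × ℝ =>
        (Real.exp (-(3*a/4) * p.1^2) * p.1^3) * (1:ℝ))
        ((volume.restrict (Set.Ioi (0:ℝ))).prod (volume.restrict (Set.Ioc (π/3) (2*π/3)))) := by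
      have h1 : IntegrableOn (fun r : ℝ => Real.exp (-(3*a/4) * r^2) * r^3) (Set.Ioi 0) := by
        have := integrableOn_rpow_mul_exp_neg_mul_sq (b := 3*a/4) (by linarith) (s := 3) (by norm_num)
        apply this.congr_fun ?_ measurableSet_Ioi
        intro x hx
        have hx3 : x ^ (3:ℝ) = x ^ (3:ℕ) := by
          rw [← Real.rpow_natCast]; norm_num
        simp only [hx3]
        ring
      exact Integrable.mul_prod h1 (integrable_const 1)
    refine hg.mono' ?_ ?_
    · exact (((Real.continuous_exp.comp (by fun_prop)).mul (by fun_prop)).mul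
        (hw.comp continuous_snd)).aestronglyMeasurable
    · rw [Measure.prod_restrict]
      filter_upwards [ae_restrict_mem (measurableSet_Ioi.prod measurableSet_Ioc)] with p hp
      obtain ⟨hp1, hp2⟩ := hp
      simp only [Set.mem_Ioi] at hp1
      obtain ⟨hφ1, hφ2⟩ := hp2
      have hs : Real.sqrt 3 / 2 ≤ Real.sin p.2 := sin_lb hφ1.le hφ2
      have hs2 : (3:ℝ)/4 ≤ Real.sin p.2 ^ 2 := by
        nlinarith [Real.sq_sqrt (by norm_num : (3:ℝ) ≥ 0), Real.sqrt_nonneg 3]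
      have h1 : Real.exp (-a * p.1^2 * Real.sin p.2^2) ≤ Real.exp (-(3*a/4) * p.1^2) := by
        apply Real.exp_le_exp.2; nlinarith [mul_le_mul_of_nonneg_left hs2 (by positivity : (0:ℝ) ≤ a * p.1^2)]
      have hb' := hb p.2
      have hexp := Real.exp_pos (-(3*a/4) * p.1^2)
      rw [Function.uncurry]
      simp only [Real.norm_eq_abs, abs_mul]
      calc |Real.exp (-a * p.1^2 * Real.sin p.2^2)| * |p.1^3| * |w p.2|
          ≤ Real.exp (-(3*a/4) * p.1^2) * p.1^3 * 1 := by
            apply mul_le_mul _ hb' (abs_nonneg _) (by positivity)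
            rw [abs_of_pos (Real.exp_pos _), abs_of_pos (by positivity)]
            exact mul_le_mul_of_nonneg_right h1 (by positivity)
        _ = Real.exp (-(3*a/4) * p.1^2) * p.1^3 * 1 := rfl
  rw [integral_integral_swap hint]
  refine setIntegral_congr_fun measurableSet_Ioc (fun φ hφ => ?_)
  obtain ⟨hφ1, hφ2⟩ := hφ
  have hsp : 0 < Real.sin φ := Real.sin_pos_of_pos_of_lt_pi (by linarith) (by linarith)
  have hc : 0 < a * Real.sin φ^2 := by positivity
  have h1 : (fun r => Real.exp (-a * r^2 * Real.sin φ^2) * r^3 * w φ)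
      = fun r => (Real.exp (-(a * Real.sin φ^2) * r^2) * r^3) * w φ := by
    funext r; ring_nf
  rw [h1, integral_mul_const, gauss_cubed hc]
  ring


lemma cot_deriv {φ : ℝ} (hs : Real.sin φ ≠ 0) :
    HasDerivAt (fun x => Real.cos x / Real.sin x) (-(1 / Real.sin φ ^ 2)) φ := by
  have h := (Real.hasDerivAt_cos φ).fun_div (Real.hasDerivAt_sin φ) hs
  refine h.congr_deriv ?_
  have := Real.sin_sq_add_cos_sq φ
  field_simp
  nlinarith [this]

lemma I2 : ∫ φ in (π/3)..(2*π/3), 1 / Real.sin φ ^ 2 = 2 * Real.sqrt 3 / 3 := by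
  have hpi := Real.pi_pos
  have hle : π/3 ≤ 2*π/3 := by linarith
  have hsin : ∀ x ∈ Set.uIcc (π/3) (2*π/3), Real.sin x ≠ 0 := by
    intro x hx
    rw [Set.uIcc_of_le hle] at hx
    exact (Real.sin_pos_of_pos_of_lt_pi (by linarith [hx.1]) (by linarith [hx.2])).ne'
  have key := intervalIntegral.integral_eq_sub_of_hasDerivAt
    (f := fun x => -(Real.cos x / Real.sin x)) (f' := fun φ => 1 / Real.sin φ ^ 2)
    (a := π/3) (b := 2*π/3)
    (fun t ht => by simpa using (cot_deriv (hsin t ht)).fun_neg)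
    (ContinuousOn.intervalIntegrable
      (continuousOn_const.div (by fun_prop) (fun x hx => pow_ne_zero 2 (hsin x hx))))
  rw [key]
  have h23 : (2*π/3) = π - π/3 := by ring
  simp only [h23, Real.cos_pi_sub, Real.sin_pi_sub, Real.cos_pi_div_three, Real.sin_pi_div_three]
  have h3 : Real.sqrt 3 * Real.sqrt 3 = 3 := Real.mul_self_sqrt (by norm_num)
  have h3p : (0:ℝ) < Real.sqrt 3 := Real.sqrt_pos.2 (by norm_num)
  field_simp
  nlinarith [h3]

lemma I1 : ∫ φ in (π/3)..(2*π/3), Real.cos φ ^ 2 / Real.sin φ ^ 4 = 2 * Real.sqrt 3 / 27 := by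
  have hpi := Real.pi_pos
  have hle : π/3 ≤ 2*π/3 := by linarith
  have hsin : ∀ x ∈ Set.uIcc (π/3) (2*π/3), Real.sin x ≠ 0 := by
    intro x hx
    rw [Set.uIcc_of_le hle] at hx
    exact (Real.sin_pos_of_pos_of_lt_pi (by linarith [hx.1]) (by linarith [hx.2])).ne'
  have key := intervalIntegral.integral_eq_sub_of_hasDerivAt
    (f := fun x => -((Real.cos x / Real.sin x)^3)/3)
    (f' := fun φ => Real.cos φ ^ 2 / Real.sin φ ^ 4)
    (a := π/3) (b := 2*π/3)
    (fun t ht => by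
      have hs := hsin t ht
      have h := (((cot_deriv hs).fun_pow 3).fun_neg.div_const 3)
      refine h.congr_deriv ?_
      norm_num
      field_simp)
    (ContinuousOn.intervalIntegrable
      ((by fun_prop : ContinuousOn (fun x => Real.cos x ^ 2) _).div (by fun_prop)
        (fun x hx => pow_ne_zero 4 (hsin x hx))))
  rw [key]
  have h23 : (2*π/3) = π - π/3 := by ring
  simp only [h23, Real.cos_pi_sub, Real.sin_pi_sub, Real.cos_pi_div_three, Real.sin_pi_div_three]
  have h3 : Real.sqrt 3 * Real.sqrt 3 = 3 := Real.mul_self_sqrt (by norm_num)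
  have h3p : (0:ℝ) < Real.sqrt 3 := Real.sqrt_pos.2 (by norm_num)
  have h33 : Real.sqrt 3 ^ 3 = 3 * Real.sqrt 3 := by
    rw [pow_succ, Real.sq_sqrt (by norm_num : (0:ℝ) ≤ 3)]
  field_simp
  rw [show Real.sqrt 3 ^ 4 = (Real.sqrt 3 * Real.sqrt 3) ^ 2 by ring, h3]
  nlinarith [h3]


theorem stmt_7 (l : ℝ) (hl : 0 < l) :
    (l * ∫ r in Set.Ioi (0:ℝ), ∫ φ in (π/3)..(2*π/3),
        Real.exp (-(l / Real.sqrt 3) * r^2 * Real.sin φ ^ 2) * r^3 * Real.cos φ ^ 2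
      = Real.sqrt 3 / (9 * l)) ∧
    (l * ∫ r in Set.Ioi (0:ℝ), ∫ φ in (π/3)..(2*π/3),
        Real.exp (-(l / Real.sqrt 3) * r^2 * Real.sin φ ^ 2) * r^3 * Real.sin φ ^ 2
      = Real.sqrt 3 / l) := by
  have h3p : (0:ℝ) < Real.sqrt 3 := Real.sqrt_pos.2 (by norm_num)
  have h3 : Real.sqrt 3 ^ 2 = 3 := Real.sq_sqrt (by norm_num)
  have ha : 0 < l / Real.sqrt 3 := div_pos hl h3p
  have ha2 : (l / Real.sqrt 3)^2 = l^2/3 := by rw [div_pow, h3]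
  constructor
  · rw [swapped ha (fun φ => Real.cos φ ^ 2) (by fun_prop)
      (fun φ => by
        rw [abs_of_nonneg (sq_nonneg _)]
        show Real.cos φ ^ 2 ≤ 1
        nlinarith [Real.neg_one_le_cos φ, Real.cos_le_one φ])]
    have heq : ∀ φ : ℝ, Real.cos φ ^ 2 / (2 * (l/Real.sqrt 3 * Real.sin φ ^ 2)^2)
        = (1/(2*(l/Real.sqrt 3)^2)) * (Real.cos φ ^ 2 / Real.sin φ ^ 4) := by
      intro φ; ring
    simp_rw [heq, intervalIntegral.integral_const_mul, I1, ha2]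
    have hl' := hl.ne'
    field_simp
    ring
  · rw [swapped ha (fun φ => Real.sin φ ^ 2) (by fun_prop)
      (fun φ => by
        rw [abs_of_nonneg (sq_nonneg _)]
        show Real.sin φ ^ 2 ≤ 1
        nlinarith [Real.neg_one_le_sin φ, Real.sin_le_one φ])]
    have heq : ∀ φ : ℝ, Real.sin φ ^ 2 / (2 * (l/Real.sqrt 3 * Real.sin φ ^ 2)^2)
        = (1/(2*(l/Real.sqrt 3)^2)) * (1 / Real.sin φ ^ 2) := by
      intro φ
      rcases eq_or_ne (Real.sin φ) 0 with h | h
      · simp [h]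
      · field_simp
    simp_rw [heq, intervalIntegral.integral_const_mul, I2, ha2]
    have hl' := hl.ne'
    field_simp
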